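/- Let d ≥ 1 be an integer, p > 1 a real number, ν ∈ ℝ, and let V : ℝ^d → ℝ be smooth with all partial derivatives of polynomial growth. Suppose u : ℝ^d → ℝ is a positive Schwartz function satisfying Δu + u^p − (ν + V(x)) u = 0 pointwise on ℝ^d. Then for each j ∈ {1, …, d}, ∫_{ℝ^d} (∂u/∂x_j) · [ −Δ(∂u/∂x_j) + (ν + V − p u^{p−1}) (∂u/∂x_j) ] dx = (1/2) ∫_{ℝ^d} u² · (∂²V/∂x_j²) dx. -/

import Mathlib

open scoped ContDiff
open MeasureTheory Real Filter Topology Asymptotics FourierTransform SchwartzMap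

section Aux


variable {d : ℕ}

local notation "𝔼" => EuclideanSpace ℝ (Fin d)

lemma schwartz_temperate (f : 𝓢(𝔼, ℝ)) : Function.HasTemperateGrowth ⇑f := by
  refine ⟨f.smooth', fun n => ⟨0, SchwartzMap.seminorm ℝ 0 n f, fun x => ?_⟩⟩
  simpa using SchwartzMap.norm_iteratedFDeriv_le_seminorm ℝ f n x

lemma temperate_pd {f : 𝔼 → ℝ} (hf : Function.HasTemperateGrowth f) (v : 𝔼) :
    Function.HasTemperateGrowth (fun x => fderiv ℝ f x v) := by
  have hf' : ContDiff ℝ ∞ (fderiv ℝ f) := hf.1.fderiv_right le_rfl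
  refine ⟨hf'.clm_apply contDiff_const, fun n => ?_⟩
  obtain ⟨k, C, hC⟩ := hf.2 (n + 1)
  refine ⟨k, ‖v‖ * C, fun x => ?_⟩
  calc ‖iteratedFDeriv ℝ n (fun x => fderiv ℝ f x v) x‖
      ≤ ‖v‖ * ‖iteratedFDeriv ℝ n (fderiv ℝ f) x‖ :=
        norm_iteratedFDeriv_clm_apply_const hf'.contDiffAt (mod_cast le_top)
    _ = ‖v‖ * ‖iteratedFDeriv ℝ (n + 1) f x‖ := by rw [norm_iteratedFDeriv_fderiv]
    _ ≤ ‖v‖ * (C * (1 + ‖x‖) ^ k) :=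
        mul_le_mul_of_nonneg_left (hC x) (norm_nonneg v)
    _ = ‖v‖ * C * (1 + ‖x‖) ^ k := by ring

lemma integral_pd_zero (f : 𝓢(𝔼, ℝ)) (v : 𝔼) :
    ∫ x, fderiv ℝ (⇑f) x v = 0 := by
  set F : 𝔼 → ℂ := fun x => (f x : ℂ) with hF
  have hFi : Integrable F := f.integrable.ofReal
  have hFdx : ∀ x, HasFDerivAt F (Complex.ofRealCLM.comp (fderiv ℝ (⇑f) x)) x := fun x =>
    Complex.ofRealCLM.hasFDerivAt.comp x f.differentiableAt.hasFDerivAt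
  have hFd : Differentiable ℝ F := fun x => (hFdx x).differentiableAt
  have hfderivF : fderiv ℝ F = fun x => Complex.ofRealCLM.comp (fderiv ℝ (⇑f) x) :=
    funext fun x => (hFdx x).fderiv
  have hF' : Integrable (fderiv ℝ F) := by
    rw [hfderivF]
    have h1 : Integrable (fun x => fderiv ℝ (⇑f) x) := by
      have := (SchwartzMap.fderivCLM ℝ 𝔼 ℝ f).integrable (μ := volume)
      exact this.congr (ae_of_all _ fun x => SchwartzMap.fderivCLM_apply ℝ f x)
    exact (ContinuousLinearMap.compL ℝ 𝔼 ℝ ℂ Complex.ofRealCLM).integrable_comp h1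
  have key := Real.fourier_fderiv hFi hFd hF'
  have h0 : 𝓕 (fderiv ℝ F) 0 = ∫ x, fderiv ℝ F x := by
    rw [Real.fourier_eq]
    simp
  have h0' : VectorFourier.fourierSMulRight (-innerSL ℝ) (𝓕 F) 0 = 0 := by
    simp only [VectorFourier.fourierSMulRight, map_zero, neg_zero]
    ext y
    simp
  have hint : (∫ x, fderiv ℝ F x) = 0 := by
    rw [← h0, key, h0']
  have happ : (∫ x, fderiv ℝ F x v) = 0 := by
    rw [← ContinuousLinearMap.integral_apply hF' v, hint]; rfl
  have h2 : ∫ x, ((fderiv ℝ (⇑f) x v : ℝ) : ℂ) = 0 := by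
    rw [← happ]
    refine integral_congr_ae (Eventually.of_forall fun x => ?_)
    rw [hfderivF]; rfl
  have h2' : ∫ x, (RCLike.ofReal (K := ℂ) (fderiv ℝ (⇑f) x v)) = 0 := h2
  rw [integral_ofReal] at h2'
  exact RCLike.ofReal_eq_zero.mp h2'

lemma schwartz_sum_apply {ι : Type*} (s : Finset ι) (f : ι → 𝓢(𝔼, ℝ)) (x : 𝔼) :
    (∑ i ∈ s, f i) x = ∑ i ∈ s, f i x := by
  have := congrFun (map_sum (FunLike.coeAddMonoidHom 𝓢(𝔼, ℝ) 𝔼 ℝ) f s) x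
  simp only [FunLike.coe_coeAddMonoidHom, Finset.sum_apply] at this
  exact this

lemma pd_comm' (f : 𝓢(𝔼, ℝ)) (a b x : 𝔼) :
    fderiv ℝ (fun y => fderiv ℝ (⇑f) y a) x b = fderiv ℝ (fun y => fderiv ℝ (⇑f) y b) x a := by
  have hdf : Differentiable ℝ (fderiv ℝ (⇑f)) := by
    have h : (fderiv ℝ (⇑f)) = ⇑(SchwartzMap.fderivCLM ℝ 𝔼 ℝ f) :=
      funext fun y => (SchwartzMap.fderivCLM_apply ℝ f y).symm
    rw [h]; exact fun y => (SchwartzMap.fderivCLM ℝ 𝔼 ℝ f).differentiableAt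
  have hx : HasFDerivAt (fderiv ℝ (⇑f)) (fderiv ℝ (fderiv ℝ (⇑f)) x) x :=
    (hdf x).hasFDerivAt
  have hsymm := second_derivative_symmetric
    (fun y => f.differentiableAt.hasFDerivAt) hx a b
  have key : ∀ c cc : 𝔼,
      fderiv ℝ (fun y => fderiv ℝ (⇑f) y c) x cc = fderiv ℝ (fderiv ℝ (⇑f)) x cc c := by
    intro c cc
    have h2 : fderiv ℝ ((ContinuousLinearMap.apply ℝ ℝ c) ∘ (fderiv ℝ (⇑f))) x
        = (ContinuousLinearMap.apply ℝ ℝ c).comp (fderiv ℝ (fderiv ℝ (⇑f)) x) :=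
      ((ContinuousLinearMap.apply ℝ ℝ c).hasFDerivAt.comp x hx).fderiv
    have h3 : (fun y => fderiv ℝ (⇑f) y c) = (ContinuousLinearMap.apply ℝ ℝ c) ∘ (fderiv ℝ (⇑f)) :=
      rfl
    rw [h3, h2]; rfl
  rw [key a b, key b a, hsymm]

noncomputable def pderivCLM (m : 𝔼) : 𝓢(𝔼, ℝ) →L[ℝ] 𝓢(𝔼, ℝ) := LineDeriv.lineDerivOpCLM ℝ 𝓢(𝔼, ℝ) m

lemma pderivCLM_apply (m : 𝔼) (f : 𝓢(𝔼, ℝ)) (x : 𝔼) : pderivCLM m f x = fderiv ℝ (⇑f) x m := rfl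

lemma pderiv_comm (f : 𝓢(𝔼, ℝ)) (a b : 𝔼) :
    pderivCLM b (pderivCLM a f) = pderivCLM a (pderivCLM b f) := by
  ext x
  have h1 : ⇑(pderivCLM a f) = fun y => fderiv ℝ (⇑f) y a :=
    funext fun y => pderivCLM_apply a f y
  have h2 : ⇑(pderivCLM b f) = fun y => fderiv ℝ (⇑f) y b :=
    funext fun y => pderivCLM_apply b f y
  rw [pderivCLM_apply, pderivCLM_apply, h1, h2]
  exact pd_comm' f a b x


end Aux


/-- Partial derivative of `f` in the `j`-th coordinate direction. -/
noncomputable def pd {d : ℕ} {E : Type*} [NormedAddCommGroup E] [NormedSpace ℝ E]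
    (f : EuclideanSpace ℝ (Fin d) → E) (j : Fin d) (x : EuclideanSpace ℝ (Fin d)) : E :=
  fderiv ℝ f x (EuclideanSpace.single j 1)

/-- Euclidean Laplacian: sum of second partial derivatives. -/
noncomputable def lap {d : ℕ} {E : Type*} [NormedAddCommGroup E] [NormedSpace ℝ E]
    (f : EuclideanSpace ℝ (Fin d) → E) (x : EuclideanSpace ℝ (Fin d)) : E :=
  ∑ j, pd (pd f j) j x

/-- the quadratic form of `L₊^{(V)}` at the translation mode `∂u/∂x_j`
equals `(1/2) ∫ u² ∂²V/∂x_j²`. -/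
theorem quadratic_form_translation_mode (d : ℕ) (hd : 1 ≤ d) (p : ℝ) (hp : 1 < p)
    (ν : ℝ) (V : EuclideanSpace ℝ (Fin d) → ℝ)
    (hV : Function.HasTemperateGrowth V)
    (u : SchwartzMap (EuclideanSpace ℝ (Fin d)) ℝ)
    (hupos : ∀ x, 0 < u x)
    (hueq : ∀ x, lap (⇑u) x + u x ^ p - (ν + V x) * u x = 0) :
    ∀ j : Fin d,
      ∫ x, pd (⇑u) j x *
          (-(lap (pd (⇑u) j) x) + (ν + V x - p * u x ^ (p - 1)) * pd (⇑u) j x)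
        = (1 / 2) * ∫ x, (u x) ^ 2 * pd (pd V j) j x := by
  intro j
  set e : EuclideanSpace ℝ (Fin d) := EuclideanSpace.single j (1 : ℝ) with he
  -- derivative CLMs
  set Di : Fin d → (𝓢(EuclideanSpace ℝ (Fin d), ℝ) →L[ℝ] 𝓢(EuclideanSpace ℝ (Fin d), ℝ)) :=
    fun i => pderivCLM (EuclideanSpace.single i (1 : ℝ)) with hDi
  have hpd : ∀ (f : 𝓢(EuclideanSpace ℝ (Fin d), ℝ)) (i : Fin d), pd (⇑f) i = ⇑(Di i f) :=
    fun f i => funext fun x => (pderivCLM_apply _ f x).symm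
  have hVdiff : Differentiable ℝ V := hV.1.differentiable (by simp)
  -- the Laplacian of u as a Schwartz map
  set L : 𝓢(EuclideanSpace ℝ (Fin d), ℝ) := ∑ i, Di i (Di i u) with hL
  have hlap : lap (⇑u) = ⇑L := by
    funext x
    rw [hL, schwartz_sum_apply, lap]
    refine Finset.sum_congr rfl fun i _ => ?_
    show pd (pd (⇑u) i) i x = (Di i (Di i u)) x
    rw [hpd u i, hpd (Di i u) i]
  -- commuting derivative with Laplacian
  have hLe : ∀ x, fderiv ℝ (⇑L) x e = lap (pd (⇑u) j) x := by
    intro x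
    have h1 : pderivCLM e L = ∑ i, Di i (Di i (pderivCLM e u)) := by
      rw [hL, map_sum]
      refine Finset.sum_congr rfl fun i _ => ?_
      rw [show pderivCLM e (Di i (Di i u)) = Di i (pderivCLM e (Di i u)) from
        pderiv_comm (Di i u) _ _, show pderivCLM e (Di i u) = Di i (pderivCLM e u) from
        pderiv_comm u _ _]
    have h2 : fderiv ℝ (⇑L) x e = (pderivCLM e L) x := (pderivCLM_apply e L x).symm
    rw [h2, h1, schwartz_sum_apply, lap]
    refine Finset.sum_congr rfl fun i _ => ?_
    rw [show pd (⇑u) j = ⇑(pderivCLM e u) from hpd u j]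
    rw [hpd (pderivCLM e u) i, hpd (Di i (pderivCLM e u)) i]
  -- pointwise identity from differentiating the PDE
  have key : ∀ x, -(lap (pd (⇑u) j) x) + (ν + V x - p * u x ^ (p - 1)) * pd (⇑u) j x
      = -(fderiv ℝ V x e * u x) := by
    intro x
    have h1 : HasFDerivAt (lap (⇑u)) (fderiv ℝ (⇑L) x) x := by
      rw [hlap]; exact L.differentiableAt.hasFDerivAt
    have h2 : HasFDerivAt (fun y => u y ^ p) ((p * u x ^ (p - 1)) • fderiv ℝ (⇑u) x) x :=
      HasFDerivAt.rpow_const u.differentiableAt.hasFDerivAt (Or.inl (hupos x).ne')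
    have h3 : HasFDerivAt (fun y => (ν + V y) * u y)
        ((ν + V x) • fderiv ℝ (⇑u) x + u x • fderiv ℝ V x) x :=
      HasFDerivAt.mul ((hVdiff x).hasFDerivAt.const_add ν) u.differentiableAt.hasFDerivAt
    have hsum := (h1.add h2).sub h3
    have hfun : (fun y => lap (⇑u) y + u y ^ p - (ν + V y) * u y) = fun _ => (0 : ℝ) :=
      funext hueq
    have hzero : HasFDerivAt (fun y => lap (⇑u) y + u y ^ p - (ν + V y) * u y)
        (0 : EuclideanSpace ℝ (Fin d) →L[ℝ] ℝ) x := by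
      rw [hfun]; exact hasFDerivAt_const 0 x
    have hDeq := hsum.unique hzero
    have heval := congrArg (fun T : EuclideanSpace ℝ (Fin d) →L[ℝ] ℝ => T e) hDeq
    simp only [ContinuousLinearMap.sub_apply, ContinuousLinearMap.add_apply,
      ContinuousLinearMap.smul_apply, ContinuousLinearMap.zero_apply, smul_eq_mul] at heval
    rw [hLe x] at heval
    have hw : pd (⇑u) j x = fderiv ℝ (⇑u) x e := rfl
    rw [hw]
    nlinarith [heval]
  -- Schwartz products with temperate-growth functions
  have hu_t : Function.HasTemperateGrowth (⇑u) := schwartz_temperate u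
  have hV1 : Function.HasTemperateGrowth (fun x => fderiv ℝ V x e) := temperate_pd hV e
  have hV2 : Function.HasTemperateGrowth
      (fun x => fderiv ℝ (fun y => fderiv ℝ V y e) x e) := temperate_pd hV1 e
  set uu : 𝓢(EuclideanSpace ℝ (Fin d), ℝ) :=
    bilinLeftCLM (ContinuousLinearMap.mul ℝ ℝ) hu_t u with huu
  have huu_apply : ∀ x, uu x = u x * u x := fun x => rfl
  set g : 𝓢(EuclideanSpace ℝ (Fin d), ℝ) :=
    bilinLeftCLM (ContinuousLinearMap.mul ℝ ℝ) hV1 uu with hg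
  have hg_apply : ∀ x, g x = uu x * fderiv ℝ V x e := fun x => rfl
  set q : 𝓢(EuclideanSpace ℝ (Fin d), ℝ) :=
    bilinLeftCLM (ContinuousLinearMap.mul ℝ ℝ) hV2 uu with hq
  have hq_apply : ∀ x, q x = uu x * fderiv ℝ (fun y => fderiv ℝ V y e) x e := fun x => rfl
  -- derivative of uu
  have hpduu : ∀ x, fderiv ℝ (⇑uu) x e = 2 * (u x * fderiv ℝ (⇑u) x e) := by
    intro x
    have h1 : HasFDerivAt (⇑uu) (u x • fderiv ℝ (⇑u) x + u x • fderiv ℝ (⇑u) x) x := by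
      have := HasFDerivAt.mul u.differentiableAt.hasFDerivAt u.differentiableAt.hasFDerivAt
        (x := x)
      exact this
    rw [h1.fderiv]
    simp only [ContinuousLinearMap.add_apply, ContinuousLinearMap.smul_apply, smul_eq_mul]
    ring
  -- derivative of g
  have hpdg : ∀ x, fderiv ℝ (⇑g) x e
      = uu x * fderiv ℝ (fun y => fderiv ℝ V y e) x e + fderiv ℝ V x e * fderiv ℝ (⇑uu) x e := by
    intro x
    have hV1d : Differentiable ℝ (fun y => fderiv ℝ V y e) := hV1.1.differentiable (by simp)
    have h1 : HasFDerivAt (⇑g)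
        (uu x • fderiv ℝ (fun y => fderiv ℝ V y e) x + fderiv ℝ V x e • fderiv ℝ (⇑uu) x) x := by
      have := HasFDerivAt.mul uu.differentiableAt.hasFDerivAt (hV1d x).hasFDerivAt (x := x)
      exact this
    rw [h1.fderiv]
    simp only [ContinuousLinearMap.add_apply, ContinuousLinearMap.smul_apply, smul_eq_mul]
  -- rewrite the integrand
  have hinteg : ∀ x, pd (⇑u) j x *
      (-(lap (pd (⇑u) j) x) + (ν + V x - p * u x ^ (p - 1)) * pd (⇑u) j x)
      = -(1 / 2) * (pderivCLM e g) x + (1 / 2) * q x := by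
    intro x
    rw [key x, pderivCLM_apply, hpdg x, hq_apply, hpduu x, huu_apply]
    have hw : pd (⇑u) j x = fderiv ℝ (⇑u) x e := rfl
    rw [hw]
    ring
  have hlhs : ∫ x, pd (⇑u) j x *
      (-(lap (pd (⇑u) j) x) + (ν + V x - p * u x ^ (p - 1)) * pd (⇑u) j x)
      = ∫ x, (-(1 / 2) * (pderivCLM e g) x + (1 / 2) * q x) :=
    integral_congr_ae (Eventually.of_forall hinteg)
  have hpdg0 : ∫ x, (pderivCLM e g) x = 0 := by
    have : ⇑(pderivCLM e g) = fun x => fderiv ℝ (⇑g) x e :=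
      funext fun x => pderivCLM_apply e g x
    rw [this]
    exact integral_pd_zero g e
  have hrhs : ∫ x, (u x) ^ 2 * pd (pd V j) j x = ∫ x, q x := by
    refine integral_congr_ae (Eventually.of_forall fun x => ?_)
    rw [hq_apply, huu_apply, ← sq]
    rfl
  rw [hlhs, hrhs]
  rw [integral_add (((pderivCLM e g).integrable).const_mul _) ((q.integrable).const_mul _),
    integral_const_mul, integral_const_mul, hpdg0]
  ring
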